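/- Let n > 0 be even and j, k ∈ {1,...,n}. With β_{j,l} the antisymmetric matrix satisfying β_{l,l+1} = √(2l), β_{j,l} = 0 for |j-l| ≠ 1, and α_{l,k} as defined from the oscillator wave functions, one has ∑_{l=1}^n β_{j,l} α_{l,k} = -4 δ_{jk}. -/

import Mathlib

open MeasureTheory

/-- Physicists' Hermite polynomials. -/
noncomputable def hermiteP : ℕ → ℝ → ℝ
  | 0 => fun _ => 1
  | 1 => fun x => 2 * x
  | (n + 2) => fun x => 2 * x * hermiteP (n + 1) x - 2 * ((n : ℝ) + 1) * hermiteP n x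


lemma hermiteP_zero (x : ℝ) : hermiteP 0 x = 1 := rfl
lemma hermiteP_one (x : ℝ) : hermiteP 1 x = 2 * x := rfl
lemma hermiteP_add_two (n : ℕ) (x : ℝ) :
    hermiteP (n + 2) x = 2 * x * hermiteP (n + 1) x - 2 * ((n : ℝ) + 1) * hermiteP n x := rfl

lemma hermiteP_rec (n : ℕ) (x : ℝ) :
    hermiteP (n + 1) x = 2 * x * hermiteP n x - 2 * (n : ℝ) * hermiteP (n - 1) x := by
  cases n with
  | zero => simp [hermiteP_one, hermiteP_zero]
  | succ m => simpa using hermiteP_add_two m x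

lemma hermiteP_poly (n : ℕ) : ∃ p : Polynomial ℝ, ∀ x, hermiteP n x = p.eval x := by
  induction n using Nat.strong_induction_on with
  | _ n ih =>
    match n with
    | 0 => exact ⟨1, by simp [hermiteP_zero]⟩
    | 1 => exact ⟨Polynomial.C 2 * Polynomial.X, by simp [hermiteP_one]⟩
    | (m + 2) =>
      obtain ⟨p, hp⟩ := ih (m + 1) (by omega)
      obtain ⟨q, hq⟩ := ih m (by omega)
      refine ⟨Polynomial.C 2 * Polynomial.X * p - Polynomial.C (2 * ((m : ℝ) + 1)) * q, ?_⟩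
      intro x
      simp [hermiteP_add_two, hp, hq]

lemma hermiteP_continuous (n : ℕ) : Continuous (hermiteP n) := by
  obtain ⟨p, hp⟩ := hermiteP_poly n
  have : hermiteP n = fun x => p.eval x := funext hp
  rw [this]; exact p.continuous

lemma hasDerivAt_hermiteP (n : ℕ) (x : ℝ) :
    HasDerivAt (hermiteP n) (2 * (n : ℝ) * hermiteP (n - 1) x) x := by
  induction n using Nat.strong_induction_on generalizing x with
  | _ n ih =>
    match n with
    | 0 =>
      have : HasDerivAt (hermiteP 0) 0 x := hasDerivAt_const x (1:ℝ)
      simpa using this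
    | 1 =>
      have h : HasDerivAt (hermiteP 1) 2 x := by
        exact (by simpa using (hasDerivAt_id x).const_mul (2:ℝ) : HasDerivAt (fun y : ℝ => 2 * y) 2 x)
      convert h using 1
      simp [hermiteP_zero]
    | (m + 2) =>
      have h1 := ih (m + 1) (by omega) (x := x)
      have h2 := ih m (by omega) (x := x)
      have hx : HasDerivAt (fun y : ℝ => 2 * y * hermiteP (m + 1) y)
          (2 * hermiteP (m + 1) x + 2 * x * (2 * ((m:ℝ)+1) * hermiteP m x)) x := by
        have := ((hasDerivAt_id x).const_mul (2:ℝ)).mul h1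
        simp at this; exact this
      have hfull : HasDerivAt (hermiteP (m + 2))
          (2 * hermiteP (m + 1) x + 2 * x * (2 * ((m:ℝ)+1) * hermiteP m x)
            - 2 * ((m:ℝ)+1) * (2 * (m:ℝ) * hermiteP (m - 1) x)) x := by
        have := hx.sub (h2.const_mul (2 * ((m:ℝ)+1)))
        exact this.congr_of_eventuallyEq (by filter_upwards with y; rw [hermiteP_add_two]; rfl)
      convert hfull using 1
      have hs : (m + 2 - 1) = m + 1 := rfl
      rw [hs, hermiteP_rec m x]
      push_cast
      ring

/-- The oscillator wave functions `φ_j(x) = (2^j j! √π)^{-1/2} e^{-x²/2} H_j(x)`. -/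
noncomputable def phi (j : ℕ) (x : ℝ) : ℝ :=
  (Real.sqrt (2 ^ j * (j.factorial : ℝ) * Real.sqrt Real.pi))⁻¹ *
    Real.exp (-x ^ 2 / 2) * hermiteP j x


-- parity
lemma hermiteP_neg (n : ℕ) (x : ℝ) : hermiteP n (-x) = (-1) ^ n * hermiteP n x := by
  induction n using Nat.strong_induction_on generalizing x with
  | _ n ih =>
    match n with
    | 0 => simp [hermiteP_zero]
    | 1 => simp [hermiteP_one]
    | (m + 2) =>
      have e : hermiteP (m + 2) (-x)
          = 2 * (-x) * hermiteP (m + 1) (-x) - 2 * ((m : ℝ) + 1) * hermiteP m (-x) := by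
        have := hermiteP_rec (m + 1) (-x); simpa using this
      rw [e, ih (m+1) (by omega), ih m (by omega)]
      have e2 : hermiteP (m + 2) x
          = 2 * x * hermiteP (m + 1) x - 2 * ((m : ℝ) + 1) * hermiteP m x := by
        have := hermiteP_rec (m + 1) x; simpa using this
      rw [e2]; ring

noncomputable def cst (n : ℕ) : ℝ :=
  (Real.sqrt (2 ^ n * (n.factorial : ℝ) * Real.sqrt Real.pi))⁻¹

lemma phi_eq (n : ℕ) (x : ℝ) : phi n x = cst n * Real.exp (-x ^ 2 / 2) * hermiteP n x := rfl

lemma cst_pos (n : ℕ) : 0 < cst n := by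
  have h : (0:ℝ) < 2 ^ n * (n.factorial : ℝ) * Real.sqrt Real.pi := by
    positivity
  exact inv_pos.mpr (Real.sqrt_pos.mpr h)

lemma cst_succ (n : ℕ) : cst n = Real.sqrt (2 * ((n : ℝ) + 1)) * cst (n + 1) := by
  have h2 : (0:ℝ) ≤ 2 * ((n:ℝ) + 1) := by positivity
  have h1 : (2:ℝ) ^ (n+1) * ((n+1).factorial : ℝ) * Real.sqrt Real.pi
      = (2 * ((n:ℝ)+1)) * (2 ^ n * (n.factorial : ℝ) * Real.sqrt Real.pi) := by
    rw [Nat.factorial_succ]; push_cast; ring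
  unfold cst
  rw [h1, Real.sqrt_mul h2 (2 ^ n * (n.factorial : ℝ) * Real.sqrt Real.pi), mul_inv,
    ← mul_assoc, mul_inv_cancel₀ (by positivity), one_mul]

lemma phi_succ (n : ℕ) (x : ℝ) :
    Real.sqrt (2 * ((n : ℝ) + 1)) * phi (n + 1) x
      = cst n * Real.exp (-x ^ 2 / 2) * hermiteP (n + 1) x := by
  rw [phi_eq, cst_succ n]; ring

lemma phi_low (n : ℕ) (x : ℝ) :
    Real.sqrt (2 * (n : ℝ)) * phi (n - 1) x
      = cst n * Real.exp (-x ^ 2 / 2) * (2 * (n : ℝ) * hermiteP (n - 1) x) := by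
  cases n with
  | zero => simp
  | succ m =>
    simp only [Nat.add_sub_cancel]
    push_cast
    set s := Real.sqrt (2 * ((m:ℝ)+1)) with hs
    have hsne : s ≠ 0 := ne_of_gt (Real.sqrt_pos.mpr (by positivity))
    have hss : s * s = 2 * ((m:ℝ)+1) := Real.mul_self_sqrt (by positivity)
    have h : cst (m + 1) = s⁻¹ * cst m := by
      rw [cst_succ m, ← hs, ← mul_assoc, inv_mul_cancel₀ hsne, one_mul]
    rw [phi_eq, h, ← hss]
    field_simp

noncomputable def phiD (n : ℕ) (x : ℝ) : ℝ :=
  (Real.sqrt (2 * (n : ℝ)) * phi (n - 1) x - Real.sqrt (2 * ((n : ℝ) + 1)) * phi (n + 1) x) / 2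

lemma phiD_eq (n : ℕ) (x : ℝ) :
    phiD n x = cst n * Real.exp (-x ^ 2 / 2) *
      (2 * (n : ℝ) * hermiteP (n - 1) x - x * hermiteP n x) := by
  unfold phiD
  rw [phi_low, phi_succ, hermiteP_rec]
  ring

lemma hasDerivAt_phi (n : ℕ) (x : ℝ) : HasDerivAt (phi n) (phiD n x) x := by
  have hexp : HasDerivAt (fun y : ℝ => Real.exp (-y ^ 2 / 2)) (-x * Real.exp (-x ^ 2 / 2)) x := by
    have h1 : HasDerivAt (fun y : ℝ => -y ^ 2 / 2) (-x) x := by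
      have := (hasDerivAt_pow 2 x).neg.div_const 2
      simpa using this.congr_deriv (by ring)
    simpa [mul_comm] using h1.exp
  have h := ((hexp.mul (hasDerivAt_hermiteP n x)).const_mul (cst n))
  have h2 : HasDerivAt (phi n)
      (cst n * (-x * Real.exp (-x ^ 2 / 2) * hermiteP n x
        + Real.exp (-x ^ 2 / 2) * (2 * (n : ℝ) * hermiteP (n - 1) x))) x := by
    refine h.congr_of_eventuallyEq ?_
    filter_upwards with y
    rw [phi_eq]; simp only [Pi.mul_apply]; ring
  refine h2.congr_deriv ?_
  rw [phiD_eq]; ring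

lemma xphi (n : ℕ) (x : ℝ) :
    x * phi n x = (Real.sqrt (2 * (n : ℝ)) * phi (n - 1) x
      + Real.sqrt (2 * ((n : ℝ) + 1)) * phi (n + 1) x) / 2 := by
  rw [phi_low, phi_succ, hermiteP_rec, phi_eq]
  ring

lemma phi_raise (n : ℕ) (x : ℝ) :
    Real.sqrt (2 * ((n : ℝ) + 1)) * phi (n + 1) x = x * phi n x - phiD n x := by
  rw [xphi]; unfold phiD; ring

lemma phi_lower (n : ℕ) (x : ℝ) :
    Real.sqrt (2 * (n : ℝ)) * phi (n - 1) x = x * phi n x + phiD n x := by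
  rw [xphi]; unfold phiD; ring

lemma phi_neg (n : ℕ) (x : ℝ) : phi n (-x) = (-1) ^ n * phi n x := by
  rw [phi_eq, phi_eq, hermiteP_neg, neg_pow, neg_sq]
  ring

lemma phi_continuous (n : ℕ) : Continuous (phi n) := by
  apply Continuous.mul
  · exact (continuous_const.mul (Real.continuous_exp.comp (by continuity)))
  · exact hermiteP_continuous n

lemma phi_poly (n : ℕ) :
    ∃ p : Polynomial ℝ, ∀ x, phi n x = p.eval x * Real.exp (-x ^ 2 / 2) := by
  obtain ⟨p, hp⟩ := hermiteP_poly n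
  exact ⟨Polynomial.C (cst n) * p, fun x => by rw [phi_eq, hp]; simp; ring_nf⟩

lemma integrable_monomial_gauss (k : ℕ) {b : ℝ} (hb : 0 < b) :
    Integrable (fun x : ℝ => x ^ k * Real.exp (-b * x ^ 2)) := by
  have := integrable_rpow_mul_exp_neg_mul_sq hb (s := (k : ℝ)) (lt_of_lt_of_le neg_one_lt_zero (Nat.cast_nonneg k))
  refine this.congr ?_
  filter_upwards with x
  rw [Real.rpow_natCast]

lemma integrable_poly_gauss (p : Polynomial ℝ) {b : ℝ} (hb : 0 < b) :
    Integrable (fun x : ℝ => p.eval x * Real.exp (-b * x ^ 2)) := by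
  have h : ∀ x : ℝ, p.eval x * Real.exp (-b * x ^ 2)
      = ∑ i ∈ Finset.range (p.natDegree + 1),
          p.coeff i * (x ^ i * Real.exp (-b * x ^ 2)) := by
    intro x
    rw [Polynomial.eval_eq_sum_range, Finset.sum_mul]
    congr 1; ext i; ring
  simp_rw [h]
  exact integrable_finset_sum _ fun i _ => (integrable_monomial_gauss i hb).const_mul _

lemma exp_half_sq (x : ℝ) : Real.exp (-x ^ 2 / 2) = Real.exp (-(1/2 : ℝ) * x ^ 2) := by
  congr 1; ring

lemma integrable_phi (n : ℕ) : Integrable (phi n) := by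
  obtain ⟨p, hp⟩ := phi_poly n
  have : (phi n) = fun x => p.eval x * Real.exp (-(1/2 : ℝ) * x ^ 2) := by
    funext x; rw [hp x, exp_half_sq]
  rw [this]
  exact integrable_poly_gauss p (by norm_num)

lemma integrable_phi_mul (n m : ℕ) : Integrable (fun x => phi n x * phi m x) := by
  obtain ⟨p, hp⟩ := phi_poly n
  obtain ⟨q, hq⟩ := phi_poly m
  have : (fun x => phi n x * phi m x)
      = fun x => (p * q).eval x * Real.exp (-(1:ℝ) * x ^ 2) := by
    funext x
    rw [hp x, hq x, Polynomial.eval_mul]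
    rw [show (-(1:ℝ) * x ^ 2) = (-x^2/2) + (-x^2/2) by ring, Real.exp_add]
    ring
  rw [this]
  exact integrable_poly_gauss _ (by norm_num)

lemma phi_tendsto_top (n : ℕ) : Filter.Tendsto (phi n) Filter.atTop (nhds 0) := by
  obtain ⟨p, hp⟩ := phi_poly n
  have hmono : ∀ k : ℕ, Filter.Tendsto (fun x : ℝ => x ^ k * Real.exp (-(1/2:ℝ) * x ^ 2))
      Filter.atTop (nhds 0) := by
    intro k
    have ho := rpow_mul_exp_neg_mul_sq_isLittleO_exp_neg (b := 1/2) (by norm_num) (k : ℝ)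
    have ho' : (fun x : ℝ => x ^ k * Real.exp (-(1/2:ℝ) * x ^ 2)) =o[Filter.atTop]
        fun x => Real.exp (-(1/2:ℝ) * x) := by
      refine Asymptotics.IsLittleO.congr' ho ?_ (by rfl)
      filter_upwards with x
      rw [Real.rpow_natCast]
    have hg : Filter.Tendsto (fun x : ℝ => Real.exp (-(1/2:ℝ) * x)) Filter.atTop (nhds 0) := by
      have h1 : Filter.Tendsto (fun x : ℝ => (1/2:ℝ) * x) Filter.atTop Filter.atTop :=
        Filter.Tendsto.const_mul_atTop (by norm_num) Filter.tendsto_id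
      have := Real.tendsto_exp_neg_atTop_nhds_zero.comp h1
      refine this.congr fun x => ?_
      simp [Function.comp, neg_mul]
    exact ho'.trans_tendsto hg
  have : (phi n) = fun x => ∑ i ∈ Finset.range (p.natDegree + 1),
      p.coeff i * (x ^ i * Real.exp (-(1/2:ℝ) * x ^ 2)) := by
    funext x
    rw [hp x, exp_half_sq, Polynomial.eval_eq_sum_range, Finset.sum_mul]
    congr 1; ext i; ring
  rw [this]
  have := tendsto_finset_sum (Finset.range (p.natDegree + 1))
    (fun i _ => ((hmono i).const_mul (p.coeff i)))
  simpa using this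

lemma phi_tendsto_bot (n : ℕ) : Filter.Tendsto (phi n) Filter.atBot (nhds 0) := by
  have h1 : Filter.Tendsto (fun x : ℝ => phi n (-x)) Filter.atBot (nhds 0) :=
    (phi_tendsto_top n).comp Filter.tendsto_neg_atBot_atTop
  have h2 : Filter.Tendsto (fun x : ℝ => (-1:ℝ)^n * phi n (-x)) Filter.atBot (nhds 0) := by
    simpa using h1.const_mul ((-1:ℝ)^n)
  refine h2.congr fun x => ?_
  rw [phi_neg, ← mul_assoc, ← pow_add, Even.neg_one_pow ⟨n, rfl⟩, one_mul]

lemma integrable_phiD_mul (n m : ℕ) : Integrable (fun x => phiD n x * phi m x) := by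
  have : (fun x => phiD n x * phi m x) = fun x =>
      (Real.sqrt (2 * (n:ℝ)) * (phi (n-1) x * phi m x)
        - Real.sqrt (2 * ((n:ℝ)+1)) * (phi (n+1) x * phi m x)) / 2 := by
    funext x; unfold phiD; ring
  rw [this]
  exact (((integrable_phi_mul (n-1) m).const_mul _).sub
    ((integrable_phi_mul (n+1) m).const_mul _)).div_const 2

lemma integrable_phi_mul_phiD (n m : ℕ) : Integrable (fun x => phi n x * phiD m x) := by
  refine (integrable_phiD_mul m n).congr ?_
  filter_upwards with x; ring

lemma integrable_xphi (a b : ℕ) : Integrable (fun x => x * phi a x * phi b x) := by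
  have : (fun x => x * phi a x * phi b x) = fun x =>
      (Real.sqrt (2 * (a:ℝ)) * (phi (a-1) x * phi b x)
        + Real.sqrt (2 * ((a:ℝ)+1)) * (phi (a+1) x * phi b x)) / 2 := by
    funext x; rw [xphi]; ring
  rw [this]
  exact (((integrable_phi_mul (a-1) b).const_mul _).add
    ((integrable_phi_mul (a+1) b).const_mul _)).div_const 2

lemma ibp_phi (a b : ℕ) :
    ∫ x, phi a x * phiD b x = - ∫ x, phiD a x * phi b x := by
  have := MeasureTheory.integral_mul_deriv_eq_deriv_mul_of_integrable
    (u := phi a) (v := phi b) (u' := phiD a) (v' := phiD b)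
    (fun x _ => hasDerivAt_phi a x) (fun x _ => hasDerivAt_phi b x)
    (by simpa [Pi.mul_def] using integrable_phi_mul_phiD a b)
    (by simpa [Pi.mul_def] using integrable_phiD_mul a b)
    (by simpa [Pi.mul_def] using integrable_phi_mul a b)
  simpa [Pi.mul_def] using this

lemma orth_step (a b : ℕ) :
    Real.sqrt (2 * ((b:ℝ)+1)) * ∫ x, phi a x * phi (b+1) x
      = Real.sqrt (2 * (a:ℝ)) * ∫ x, phi (a-1) x * phi b x := by
  have h1 : Real.sqrt (2 * ((b:ℝ)+1)) * ∫ x, phi a x * phi (b+1) x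
      = ∫ x, phi a x * (Real.sqrt (2 * ((b:ℝ)+1)) * phi (b+1) x) := by
    rw [← MeasureTheory.integral_const_mul]
    congr 1; funext x; ring
  have h2 : (∫ x, phi a x * (Real.sqrt (2 * ((b:ℝ)+1)) * phi (b+1) x))
      = (∫ x, x * phi a x * phi b x) - ∫ x, phi a x * phiD b x := by
    rw [← MeasureTheory.integral_sub (integrable_xphi a b) (integrable_phi_mul_phiD a b)]
    congr 1; funext x; rw [phi_raise]; ring
  have h3 : (∫ x, x * phi a x * phi b x) - (∫ x, phi a x * phiD b x)
      = (∫ x, x * phi a x * phi b x) + ∫ x, phiD a x * phi b x := by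
    rw [ibp_phi]; ring
  have h4 : (∫ x, x * phi a x * phi b x) + (∫ x, phiD a x * phi b x)
      = ∫ x, (x * phi a x + phiD a x) * phi b x := by
    rw [← MeasureTheory.integral_add (integrable_xphi a b) (integrable_phiD_mul a b)]
    congr 1; funext x; ring
  have h5 : (∫ x, (x * phi a x + phiD a x) * phi b x)
      = Real.sqrt (2 * (a:ℝ)) * ∫ x, phi (a-1) x * phi b x := by
    rw [← MeasureTheory.integral_const_mul]
    congr 1; funext x; rw [← phi_lower]; ring
  rw [h1, h2, h3, h4, h5]

lemma orth00 : ∫ x, phi 0 x * phi 0 x = 1 := by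
  have h : ∀ x:ℝ, phi 0 x * phi 0 x = (cst 0)^2 * Real.exp (-(1:ℝ) * x^2) := by
    intro x
    rw [phi_eq]
    rw [show (-(1:ℝ) * x^2) = (-x^2/2) + (-x^2/2) by ring, Real.exp_add, hermiteP_zero]
    ring
  rw [show (fun x => phi 0 x * phi 0 x) = fun x => (cst 0)^2 * Real.exp (-(1:ℝ) * x^2)
      from funext h]
  rw [MeasureTheory.integral_const_mul, integral_gaussian]
  have hc : cst 0 = (Real.sqrt (Real.sqrt Real.pi))⁻¹ := by
    unfold cst; norm_num
  rw [hc, div_one, inv_pow, Real.sq_sqrt (Real.sqrt_nonneg _)]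
  exact inv_mul_cancel₀ (Real.sqrt_ne_zero'.mpr Real.pi_pos)

lemma orth0 (b : ℕ) : ∫ x, phi 0 x * phi b x = if 0 = b then 1 else 0 := by
  cases b with
  | zero => simpa using orth00
  | succ m =>
    have h := orth_step 0 m
    have h0 : Real.sqrt (2 * ((0:ℕ):ℝ)) = 0 := by norm_num
    rw [h0, zero_mul] at h
    have hpos : (0:ℝ) < Real.sqrt (2*((m:ℝ)+1)) := Real.sqrt_pos.mpr (by positivity)
    have : (∫ x, phi 0 x * phi (m+1) x) = 0 := by
      have := mul_eq_zero.mp h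
      rcases this with h' | h'
      · exact absurd h' (ne_of_gt hpos)
      · exact h'
    rw [this, if_neg (by omega)]

lemma orth (a b : ℕ) : ∫ x, phi a x * phi b x = if a = b then 1 else 0 := by
  induction a generalizing b with
  | zero => exact orth0 b
  | succ s ih =>
    cases b with
    | zero =>
      rw [show (∫ x, phi (s+1) x * phi 0 x) = ∫ x, phi 0 x * phi (s+1) x from by
        congr 1; funext x; ring, orth0 (s+1)]
      simp
    | succ m =>
      have hstep := orth_step (s+1) m
      simp only [Nat.add_sub_cancel] at hstep
      rw [ih m] at hstep
      have hpos : (0:ℝ) < Real.sqrt (2*((m:ℝ)+1)) := Real.sqrt_pos.mpr (by positivity)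
      by_cases hsm : s = m
      · subst hsm
        rw [if_pos rfl, mul_one] at hstep
        have hc : Real.sqrt (2 * (((s+1):ℕ):ℝ)) = Real.sqrt (2*((s:ℝ)+1)) := by push_cast; rfl
        rw [hc] at hstep
        have : (∫ x, phi (s+1) x * phi (s+1) x) = 1 :=
          mul_left_cancel₀ (ne_of_gt hpos) (by rw [hstep, mul_one])
        rw [this, if_pos rfl]
      · rw [if_neg hsm, mul_zero] at hstep
        have : (∫ x, phi (s+1) x * phi (m+1) x) = 0 := by
          rcases mul_eq_zero.mp hstep with h' | h'
          · exact absurd h' (ne_of_gt hpos)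
          · exact h'
        rw [this, if_neg (by omega)]

noncomputable def Ff (m : ℕ) (y : ℝ) : ℝ := ∫ x, phi m x * Real.sign (x - y)

lemma measurable_realSign : Measurable Real.sign := by
  have h : (Real.sign : ℝ → ℝ) = fun r => if r < 0 then (-1:ℝ) else if 0 < r then 1 else 0 := by
    funext r; rfl
  rw [h]
  exact Measurable.ite (measurableSet_lt measurable_id measurable_const) measurable_const
    (Measurable.ite (measurableSet_lt measurable_const measurable_id) measurable_const
      measurable_const)

lemma abs_sign_le (r : ℝ) : ‖Real.sign r‖ ≤ 1 := by
  rcases Real.sign_apply_eq r with h | h | h <;> rw [h] <;> norm_num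

lemma integrable_mul_sign {f : ℝ → ℝ} (hf : Integrable f) (y : ℝ) :
    Integrable (fun x => f x * Real.sign (x - y)) := by
  have h := hf.bdd_mul
    ((measurable_realSign.comp ((measurable_id.sub (measurable_const : Measurable fun _ : ℝ => y)) : Measurable fun x : ℝ => x - y)).aestronglyMeasurable)
    (c := 1) (Filter.Eventually.of_forall fun x => abs_sign_le _)
  refine h.congr ?_
  filter_upwards with x
  simp only [Function.comp_apply, id_eq, Pi.sub_apply]
  ring

lemma sign_integral_split {f : ℝ → ℝ} (hf : Integrable f) (y : ℝ) :
    ∫ x, f x * Real.sign (x - y) = (∫ x in Set.Ioi y, f x) - ∫ x in Set.Iic y, f x := by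
  have hint := integrable_mul_sign hf y
  rw [← intervalIntegral.integral_Iic_add_Ioi (hint.integrableOn) (hint.integrableOn)]
  have h1 : (∫ x in Set.Iic y, f x * Real.sign (x - y)) = - ∫ x in Set.Iic y, f x := by
    rw [integral_Iic_eq_integral_Iio, integral_Iic_eq_integral_Iio, ← integral_neg]
    refine setIntegral_congr_fun measurableSet_Iio fun x hx => ?_
    rw [Real.sign_of_neg (by simpa [sub_neg] using hx)]
    ring
  have h2 : (∫ x in Set.Ioi y, f x * Real.sign (x - y)) = ∫ x in Set.Ioi y, f x := by
    refine setIntegral_congr_fun measurableSet_Ioi fun x hx => ?_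
    rw [Real.sign_of_pos (by simpa [sub_pos] using hx)]
    ring
  rw [h1, h2]; ring

lemma hasDerivAt_Ff (m : ℕ) (y : ℝ) : HasDerivAt (Ff m) (-2 * phi m y) y := by
  have hint := integrable_phi m
  have hFf : ∀ z : ℝ, Ff m z = (∫ x, phi m x)
      - 2 * ((∫ x in Set.Iic (0:ℝ), phi m x) + ∫ x in (0:ℝ)..z, phi m x) := by
    intro z
    have hP : (∫ x in Set.Iic z, phi m x)
        = (∫ x in Set.Iic (0:ℝ), phi m x) + ∫ x in (0:ℝ)..z, phi m x := by
      rw [← intervalIntegral.integral_Iic_sub_Iic hint.integrableOn hint.integrableOn]; ring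
    have hIoi : (∫ x in Set.Ioi z, phi m x)
        = (∫ x, phi m x) - ∫ x in Set.Iic z, phi m x := by
      rw [← intervalIntegral.integral_Iic_add_Ioi hint.integrableOn hint.integrableOn]; ring
    rw [show Ff m z = ∫ x, phi m x * Real.sign (x - z) from rfl, sign_integral_split hint,
      hIoi, hP]
    ring
  have hD : HasDerivAt (fun z : ℝ => ∫ x in (0:ℝ)..z, phi m x) (phi m y) y :=
    intervalIntegral.integral_hasDerivAt_right (hint.intervalIntegrable)
      ((phi_continuous m).stronglyMeasurable.stronglyMeasurableAtFilter)
      ((phi_continuous m).continuousAt)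
  have h2 : HasDerivAt (fun z : ℝ => (∫ x, phi m x)
      - 2 * ((∫ x in Set.Iic (0:ℝ), phi m x) + ∫ x in (0:ℝ)..z, phi m x))
      (0 - 2 * (0 + phi m y)) y := by
    exact (hasDerivAt_const y _).sub (((hasDerivAt_const y _).add hD).const_mul 2)
  have h3 : HasDerivAt (Ff m) (0 - 2 * (0 + phi m y)) y := by
    refine h2.congr_of_eventuallyEq ?_
    filter_upwards with z
    rw [hFf z]
  exact h3.congr_deriv (by ring)

lemma Ff_continuous (m : ℕ) : Continuous (Ff m) :=
  continuous_iff_continuousAt.mpr fun y => (hasDerivAt_Ff m y).continuousAt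

lemma Ff_bdd (m : ℕ) : ∃ C, ∀ y, ‖Ff m y‖ ≤ C := by
  refine ⟨∫ x, ‖phi m x‖, fun y => ?_⟩
  calc ‖Ff m y‖ ≤ ∫ x, ‖phi m x * Real.sign (x - y)‖ := norm_integral_le_integral_norm _
    _ ≤ ∫ x, ‖phi m x‖ := by
        refine integral_mono ((integrable_mul_sign (integrable_phi m) y).norm)
          ((integrable_phi m).norm) fun x => ?_
        rw [norm_mul]
        calc ‖phi m x‖ * ‖Real.sign (x - y)‖ ≤ ‖phi m x‖ * 1 :=
              mul_le_mul_of_nonneg_left (abs_sign_le _) (norm_nonneg _)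
          _ = ‖phi m x‖ := mul_one _

lemma integrable_mul_Ff {f : ℝ → ℝ} (hf : Integrable f) (i : ℕ) :
    Integrable (fun y => f y * Ff i y) := by
  have h := hf.bdd_mul (Ff_continuous i).aestronglyMeasurable (Filter.Eventually.of_forall (Ff_bdd i).choose_spec)
  exact h.congr (by filter_upwards with x; ring)

lemma integrable_phiD (n : ℕ) : Integrable (phiD n) := by
  have : (phiD n) = fun x =>
      (Real.sqrt (2 * (n:ℝ)) * phi (n-1) x - Real.sqrt (2 * ((n:ℝ)+1)) * phi (n+1) x) / 2 := by
    funext x; rfl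
  rw [this]
  exact (((integrable_phi (n-1)).const_mul _).sub ((integrable_phi (n+1)).const_mul _)).div_const 2

lemma sign_phiD (m : ℕ) (y : ℝ) :
    ∫ x, phiD m x * Real.sign (x - y) = -2 * phi m y := by
  rw [sign_integral_split (integrable_phiD m)]
  have h1 : (∫ x in Set.Ioi y, phiD m x) = 0 - phi m y :=
    integral_Ioi_of_hasDerivAt_of_tendsto' (fun x _ => hasDerivAt_phi m x)
      (integrable_phiD m).integrableOn (phi_tendsto_top m)
  have h2 : (∫ x in Set.Iic y, phiD m x) = phi m y - 0 :=
    integral_Iic_of_hasDerivAt_of_tendsto' (fun x _ => hasDerivAt_phi m x)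
      (integrable_phiD m).integrableOn (phi_tendsto_bot m)
  rw [h1, h2]; ring

lemma Ff_rec (m : ℕ) (y : ℝ) :
    Real.sqrt (2*((m:ℝ)+1)) * Ff (m+1) y
      = Real.sqrt (2*(m:ℝ)) * Ff (m-1) y + 4 * phi m y := by
  have hpt : ∀ x, Real.sqrt (2*((m:ℝ)+1)) * phi (m+1) x
      = Real.sqrt (2*(m:ℝ)) * phi (m-1) x - 2 * phiD m x := by
    intro x; unfold phiD; ring
  have e1 : Real.sqrt (2*((m:ℝ)+1)) * Ff (m+1) y
      = ∫ x, (Real.sqrt (2*(m:ℝ)) * (phi (m-1) x * Real.sign (x - y))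
          - 2 * (phiD m x * Real.sign (x - y))) := by
    rw [show Ff (m+1) y = ∫ x, phi (m+1) x * Real.sign (x - y) from rfl,
      ← MeasureTheory.integral_const_mul]
    congr 1; funext x
    linear_combination Real.sign (x - y) * hpt x
  rw [e1, MeasureTheory.integral_sub
    (((integrable_mul_sign (integrable_phi (m-1)) y).const_mul _))
    (((integrable_mul_sign (integrable_phiD m) y).const_mul _)),
    MeasureTheory.integral_const_mul, MeasureTheory.integral_const_mul, sign_phiD]
  rw [show (∫ x, phi (m-1) x * Real.sign (x - y)) = Ff (m-1) y from rfl]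
  ring

lemma integral_odd {f : ℝ → ℝ} (h : ∀ x, f (-x) = - f x) : ∫ x, f x = 0 := by
  have h1 : ∫ x, f (-x) = ∫ x, f x := integral_neg_eq_self f volume
  have h2 : ∫ x, f (-x) = - ∫ x, f x := by
    rw [show (fun x => f (-x)) = fun x => -(f x) from funext h, integral_neg]
  linarith [h1, h2]

lemma Ff_neg_even (m : ℕ) (hm : Even m) (y : ℝ) : Ff m (-y) = - Ff m y := by
  have h1 : Ff m (-y) = ∫ x, phi m (-x) * Real.sign (-x - -y) :=
    (integral_neg_eq_self (fun x => phi m x * Real.sign (x - -y)) volume).symm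
  rw [h1]
  have h2 : (fun x => phi m (-x) * Real.sign (-x - -y))
      = fun x => -(phi m x * Real.sign (x - y)) := by
    funext x
    rw [phi_neg, hm.neg_one_pow, one_mul,
      show (-x - -y) = -(x - y) by ring, Real.sign_neg]
    ring
  rw [h2, integral_neg]
  rfl

lemma Gpar (n i : ℕ) (hn : Even n) (hi : Even i) : ∫ y, phi n y * Ff i y = 0 := by
  refine integral_odd fun y => ?_
  rw [phi_neg, hn.neg_one_pow, one_mul, Ff_neg_even i hi]
  ring

lemma Gvanish (n : ℕ) (hn : Even n) : ∀ i, i < n → (∫ y, phi n y * Ff i y) = 0 := by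
  intro i
  induction i using Nat.strong_induction_on with
  | _ i ih =>
    intro hlt
    rcases Nat.even_or_odd i with he | ho
    · exact Gpar n i hn he
    · obtain ⟨m, rfl⟩ : ∃ m, i = m + 1 := ⟨i - 1, by rcases ho with ⟨t, rfl⟩; omega⟩
      have hInt : ∫ y, phi n y * (Real.sqrt (2*((m:ℝ)+1)) * Ff (m+1) y)
          = ∫ y, phi n y * (Real.sqrt (2*(m:ℝ)) * Ff (m-1) y + 4 * phi m y) := by
        congr 1; funext y; rw [Ff_rec]
      have hL : ∫ y, phi n y * (Real.sqrt (2*((m:ℝ)+1)) * Ff (m+1) y)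
          = Real.sqrt (2*((m:ℝ)+1)) * ∫ y, phi n y * Ff (m+1) y := by
        rw [← MeasureTheory.integral_const_mul]; congr 1; funext y; ring
      have hR : ∫ y, phi n y * (Real.sqrt (2*(m:ℝ)) * Ff (m-1) y + 4 * phi m y)
          = Real.sqrt (2*(m:ℝ)) * (∫ y, phi n y * Ff (m-1) y) + 4 * ∫ y, phi n y * phi m y := by
        rw [← MeasureTheory.integral_const_mul, ← MeasureTheory.integral_const_mul,
          ← MeasureTheory.integral_add]
        · congr 1; funext y; ring
        · exact (integrable_mul_Ff (integrable_phi n) (m-1)).const_mul _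
        · exact (integrable_phi_mul n m).const_mul _
      have horth : (∫ y, phi n y * phi m y) = 0 := by
        rw [orth]; exact if_neg (by omega)
      have hvan : (∫ y, phi n y * Ff (m-1) y) = 0 := by
        rcases Nat.eq_zero_or_pos m with rfl | hm
        · simpa using Gpar n 0 hn (Even.zero)
        · exact ih (m-1) (by omega) (by omega)
      have heq := hInt
      rw [hL, hR, horth, hvan] at heq
      have hpos : (0:ℝ) < Real.sqrt (2*((m:ℝ)+1)) := Real.sqrt_pos.mpr (by positivity)
      have : Real.sqrt (2*((m:ℝ)+1)) * ∫ y, phi n y * Ff (m+1) y = 0 := by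
        rw [heq]; ring
      rcases mul_eq_zero.mp this with h' | h'
      · exact absurd h' (ne_of_gt hpos)
      · exact h'


/-- `α_{j,k} = ∫∫ φ_{k-1}(x) φ_{j-1}(y) sgn(x-y) dx dy` for `j, k ≥ 1`,
with the convention `α_{0,k} = α_{j,0} = 0`. -/
noncomputable def alph (j k : ℕ) : ℝ :=
  if j = 0 ∨ k = 0 then 0
  else ∫ y : ℝ, ∫ x : ℝ, phi (k - 1) x * phi (j - 1) y * Real.sign (x - y)


/-- `β_{j,k}` (1-based): `β_{l,l+1} = √(2l) = -β_{l+1,l}`, and `0` for `|j-k| ≠ 1`. -/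
noncomputable def bet (j k : ℕ) : ℝ :=
  if k = j + 1 then Real.sqrt (2 * j)
  else if j = k + 1 then -Real.sqrt (2 * k)
  else 0


lemma alph_eq (j k : ℕ) (hj : 1 ≤ j) (hk : 1 ≤ k) :
    alph j k = ∫ y, phi (j-1) y * Ff (k-1) y := by
  unfold alph
  rw [if_neg (by omega)]
  congr 1; funext y
  rw [show Ff (k-1) y = ∫ x, phi (k-1) x * Real.sign (x - y) from rfl,
    ← MeasureTheory.integral_const_mul]
  congr 1; funext x; ring

lemma ibp_Ff (a i : ℕ) : ∫ y, phiD a y * Ff i y = 2 * ∫ y, phi a y * phi i y := by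
  have h := MeasureTheory.integral_mul_deriv_eq_deriv_mul_of_integrable
    (u := phi a) (v := Ff i) (u' := phiD a) (v' := fun y => -2 * phi i y)
    (fun y _ => hasDerivAt_phi a y) (fun y _ => hasDerivAt_Ff i y)
    (by
      refine ((integrable_phi_mul a i).const_mul (-2)).congr ?_
      filter_upwards with y
      simp [Pi.mul_apply]; ring)
    (by simpa [Pi.mul_def] using integrable_mul_Ff (integrable_phiD a) i)
    (by simpa [Pi.mul_def] using integrable_mul_Ff (integrable_phi a) i)
  have h2 : ∫ y, phi a y * (-2 * phi i y) = -2 * ∫ y, phi a y * phi i y := by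
    rw [← MeasureTheory.integral_const_mul]; congr 1; funext y; ring
  rw [h2] at h
  linarith [h]

lemma key_comb (j : ℕ) (hj : 1 ≤ j) (y : ℝ) :
    Real.sqrt (2*(j:ℝ)) * phi j y - Real.sqrt (2*((j-1:ℕ):ℝ)) * phi (j-2) y
      = -2 * phiD (j-1) y := by
  have h1 : (j-1)+1 = j := by omega
  have h3 : (j-1)-1 = j-2 := by omega
  have h2 : ((j-1:ℕ):ℝ)+1 = (j:ℝ) := by
    rw [Nat.cast_sub hj]; push_cast; ring
  unfold phiD
  rw [h1, h3, h2]
  ring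

lemma main_id (j k : ℕ) (hj : 1 ≤ j) (hk : 1 ≤ k) :
    Real.sqrt (2*(j:ℝ)) * (∫ y, phi j y * Ff (k-1) y)
      - Real.sqrt (2*((j-1:ℕ):ℝ)) * (∫ y, phi (j-2) y * Ff (k-1) y)
      = if j = k then -4 else 0 := by
  have hsub : Real.sqrt (2*(j:ℝ)) * (∫ y, phi j y * Ff (k-1) y)
      - Real.sqrt (2*((j-1:ℕ):ℝ)) * (∫ y, phi (j-2) y * Ff (k-1) y)
      = ∫ y, (-2 * phiD (j-1) y) * Ff (k-1) y := by
    rw [← MeasureTheory.integral_const_mul, ← MeasureTheory.integral_const_mul,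
      ← MeasureTheory.integral_sub
        ((integrable_mul_Ff (integrable_phi j) (k-1)).const_mul _)
        ((integrable_mul_Ff (integrable_phi (j-2)) (k-1)).const_mul _)]
    congr 1; funext y
    have := key_comb j hj y
    linear_combination Ff (k-1) y * this
  rw [hsub]
  have : (∫ y, (-2 * phiD (j-1) y) * Ff (k-1) y) = -2 * ∫ y, phiD (j-1) y * Ff (k-1) y := by
    rw [← MeasureTheory.integral_const_mul]; congr 1; funext y; ring
  rw [this, ibp_Ff, orth]
  have : (j - 1 = k - 1) ↔ (j = k) := by omega
  by_cases hjk : j = k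
  · rw [if_pos (this.mpr hjk), if_pos hjk]; ring
  · rw [if_neg (fun hc => hjk (this.mp hc)), if_neg hjk]; ring


/-- for `n > 0` even and `j, k ∈ {1,…,n}`, `∑_{l=1}^n β_{j,l} α_{l,k} = -4 δ_{jk}`. -/
theorem stmt9 (n j k : ℕ) (hn : Even n) (h0 : 0 < n)
    (hj : j ∈ Finset.Icc 1 n) (hk : k ∈ Finset.Icc 1 n) :
    ∑ l ∈ Finset.Icc 1 n, bet j l * alph l k = if j = k then -4 else 0 := by
  obtain ⟨hj1, hj2⟩ := Finset.mem_Icc.mp hj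
  obtain ⟨hk1, hk2⟩ := Finset.mem_Icc.mp hk
  have hbet0 : ∀ l, l ≠ j + 1 → j ≠ l + 1 → bet j l = 0 := by
    intro l h1 h2; unfold bet; rw [if_neg h1, if_neg h2]
  have halph0 : alph 0 k = 0 := by unfold alph; rw [if_pos (Or.inl rfl)]
  have halphn : alph (n+1) k = 0 := by
    rw [alph_eq (n+1) k (by omega) hk1]
    simpa using Gvanish n hn (k-1) (by omega)
  have hA : ∑ l ∈ Finset.Icc 1 n, bet j l * alph l k
      = ∑ l ∈ Finset.Icc 0 (n+1), bet j l * alph l k := by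
    refine Finset.sum_subset (Finset.Icc_subset_Icc (by omega) (by omega)) ?_
    intro l hl hlns
    have hor : l = 0 ∨ l = n + 1 := by
      simp only [Finset.mem_Icc] at hl hlns; omega
    rcases hor with rfl | rfl
    · rw [halph0, mul_zero]
    · by_cases hjn : j = n
      · subst hjn; rw [halphn, mul_zero]
      · rw [hbet0 (n+1) (by omega) (by omega), zero_mul]
  have hB : ∑ l ∈ Finset.Icc 0 (n+1), bet j l * alph l k
      = bet j (j-1) * alph (j-1) k + bet j (j+1) * alph (j+1) k := by
    have hpair : ({j-1, j+1} : Finset ℕ) ⊆ Finset.Icc 0 (n+1) := by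
      intro l hl
      simp only [Finset.mem_insert, Finset.mem_singleton] at hl
      simp only [Finset.mem_Icc]
      omega
    rw [← Finset.sum_subset hpair ?_]
    · rw [Finset.sum_pair (by omega : j-1 ≠ j+1)]
    · intro l hl hlp
      simp only [Finset.mem_insert, Finset.mem_singleton, not_or] at hlp
      obtain ⟨hp1, hp2⟩ := hlp
      exact mul_eq_zero_of_left (hbet0 l (by omega) (by omega)) _
  have hb1 : bet j (j-1) = -Real.sqrt (2*((j-1:ℕ):ℝ)) := by
    unfold bet; rw [if_neg (by omega), if_pos (by omega)]
  have hb2 : bet j (j+1) = Real.sqrt (2*(j:ℝ)) := by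
    unfold bet; rw [if_pos rfl]
  rw [hA, hB, hb1, hb2]
  rw [alph_eq (j+1) k (by omega) hk1]
  simp only [Nat.add_sub_cancel]
  rcases Nat.lt_or_ge j 2 with hj2' | hj2'
  · have hj1' : j = 1 := by omega
    subst hj1'
    have hz : Real.sqrt (2*(((1:ℕ)-1:ℕ):ℝ)) = 0 := by norm_num
    have hmain := main_id 1 k le_rfl hk1
    rw [hz] at hmain ⊢
    linarith [hmain]
  · rw [alph_eq (j-1) k (by omega) hk1]
    have hswap : (j-1)-1 = j-2 := by omega
    rw [hswap]
    have hmain := main_id j k (by omega) hk1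
    linarith [hmain]
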